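/- Let M be a subset of the closed unit ball of ℓ_∞ and let f ∈ H^∞(B_{c₀}), with f∘ι ∈ H^∞(𝔻_X) where ι(x) = (e_j^*(x))_{j≥1}. Then: (a) there exists r > 0 such that the open disk D(0, r) is contained in Cl_{B_{c₀}}(f, u) for every u ∈ M if and only if there exists r > 0 such that D(0, r) is contained in Cl_{𝔻_X}(f∘ι, u) for every u ∈ M; (b) Cl_{B_{c₀}}(f, u) contains an open disk of positive radius for every u ∈ M if and only if Cl_{𝔻_X}(f∘ι, u) contains an open disk of positive radius for every u ∈ M. (That is, F_M(𝔻_X) = Ψ(F_M(B_{c₀})) and E_M(𝔻_X) = Ψ(E_M(B_{c₀})) under the isometric isomorphism Ψ(f) = f∘ι.) -/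

import Mathlib

open Filter Topology Metric
open scoped ZeroAtInfty ENNReal

noncomputable section

structure NormSchauderBasis (X : Type*) [NormedAddCommGroup X] [NormedSpace ℂ X] where
  e : ℕ → X
  coord : ℕ → X →L[ℂ] ℂ
  norm_e : ∀ j, ‖e j‖ = 1
  coord_e : ∀ i j, coord i (e j) = if i = j then 1 else 0
  coord_bdd : ∃ C : ℝ, ∀ j, ‖coord j‖ ≤ C
  expand : ∀ x : X,
    Tendsto (fun n => ∑ j ∈ Finset.range n, coord j x • e j) atTop (nhds x)

def polydisk {X : Type*} [NormedAddCommGroup X] [NormedSpace ℂ X]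
    (B : NormSchauderBasis X) (r : ℕ → ℝ) : Set X :=
  {x | ∀ j, ‖B.coord j x‖ < r j}

def clusterSetC0 (f : C₀(ℕ, ℂ) → ℂ) (u : ℕ → ℂ) : Set ℂ :=
  {lam | ∃ (ι : Type) (l : Filter ι) (x : ι → C₀(ℕ, ℂ)), l.NeBot ∧
    (∀ i, x i ∈ ball (0 : C₀(ℕ, ℂ)) 1) ∧
    (∀ a : lp (fun _ : ℕ => ℂ) 1,
      Tendsto (fun i => ∑' j, a j * x i j) l (nhds (∑' j, a j * u j))) ∧
    Tendsto (fun i => f (x i)) l (nhds lam)}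

def clusterSetDX {X : Type*} [NormedAddCommGroup X] [NormedSpace ℂ X]
    (B : NormSchauderBasis X) (g : X → ℂ) (u : ℕ → ℂ) : Set ℂ :=
  {lam | ∃ (ι : Type) (l : Filter ι) (x : ι → X), l.NeBot ∧
    (∀ i, x i ∈ polydisk B (fun _ => 1)) ∧
    (∀ a : lp (fun _ : ℕ => ℂ) 1,
      Tendsto (fun i => ∑' j, a j * B.coord j (x i)) l (nhds (∑' j, a j * u j))) ∧
    Tendsto (fun i => g (x i)) l (nhds lam)}

namespace Stmt15Aux

/-- Truncation operator on `C₀(ℕ, ℂ)`. -/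
def trunc (N : ℕ) (y : C₀(ℕ, ℂ)) : C₀(ℕ, ℂ) where
  toFun := fun j => if j < N then y j else 0
  continuous_toFun := continuous_of_discreteTopology
  zero_at_infty' := by
    rw [cocompact_eq_atTop]
    refine Tendsto.congr' ?_ tendsto_const_nhds
    filter_upwards [eventually_ge_atTop N] with j hj
    simp [Nat.not_lt.mpr hj]

@[simp] lemma trunc_apply (N : ℕ) (y : C₀(ℕ, ℂ)) (j : ℕ) :
    trunc N y j = if j < N then y j else 0 := rfl

lemma c0_norm_le {y : C₀(ℕ, ℂ)} {C : ℝ} (hC : 0 ≤ C) (h : ∀ j, ‖y j‖ ≤ C) : ‖y‖ ≤ C := by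
  rw [← ZeroAtInftyContinuousMap.norm_toBCF_eq_norm]
  exact (BoundedContinuousFunction.norm_le hC).2 h

lemma c0_apply_le (y : C₀(ℕ, ℂ)) (j : ℕ) : ‖y j‖ ≤ ‖y‖ := by
  rw [← ZeroAtInftyContinuousMap.norm_toBCF_eq_norm]
  exact BoundedContinuousFunction.norm_coe_le_norm y.toBCF j

lemma tendsto_trunc (y : C₀(ℕ, ℂ)) : Tendsto (fun N => trunc N y) atTop (𝓝 y) := by
  rw [Metric.tendsto_atTop]
  intro ε hε
  have hz : Tendsto (fun j => y j) atTop (𝓝 0) := by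
    have := y.zero_at_infty'
    rwa [cocompact_eq_atTop] at this
  have := (hz.eventually (Metric.ball_mem_nhds (0:ℂ) (half_pos hε)))
  obtain ⟨M, hM⟩ := eventually_atTop.mp this
  refine ⟨M, fun N hN => ?_⟩
  rw [dist_eq_norm]
  have : ‖trunc N y - y‖ ≤ ε/2 := by
    apply c0_norm_le (le_of_lt (half_pos hε))
    intro j
    rw [ZeroAtInftyContinuousMap.sub_apply]
    by_cases hj : j < N
    · simp [hj]
      linarith
    · have hj' : M ≤ j := le_trans hN (Nat.not_lt.mp hj)
      have := hM j hj'
      rw [dist_zero_right] at this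
      simpa [hj] using this.le
  linarith

variable {X : Type*} [NormedAddCommGroup X] [NormedSpace ℂ X]

lemma coord_tendsto (B : NormSchauderBasis X) (x : X) :
    Tendsto (fun j => B.coord j x) atTop (𝓝 0) := by
  have h := B.expand x
  have h1 : Tendsto (fun n => (∑ j ∈ Finset.range (n + 1), B.coord j x • B.e j)
      - ∑ j ∈ Finset.range n, B.coord j x • B.e j) atTop (𝓝 (x - x)) :=
    (h.comp (tendsto_add_atTop_nat 1)).sub h
  rw [sub_self] at h1
  have h2 : Tendsto (fun n => B.coord n x • B.e n) atTop (𝓝 0) := by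
    refine h1.congr fun n => ?_
    rw [Finset.sum_range_succ]
    abel
  rw [tendsto_zero_iff_norm_tendsto_zero] at h2 ⊢
  refine h2.congr fun n => ?_
  rw [norm_smul, B.norm_e, mul_one]

/-- Embedding of a truncated `c₀` sequence into `X`. -/
def emb (B : NormSchauderBasis X) (N : ℕ) (y : C₀(ℕ, ℂ)) : X :=
  ∑ j ∈ Finset.range N, y j • B.e j

lemma coord_emb (B : NormSchauderBasis X) (N : ℕ) (y : C₀(ℕ, ℂ)) (k : ℕ) :
    B.coord k (emb B N y) = if k < N then y k else 0 := by
  rw [emb, map_sum]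
  have : ∀ j ∈ Finset.range N, B.coord k (y j • B.e j)
      = if k = j then y j else 0 := by
    intro j _
    rw [map_smul, B.coord_e, smul_eq_mul]
    by_cases h : k = j <;> simp [h]
  rw [Finset.sum_congr rfl this, Finset.sum_ite_eq (Finset.range N) k (fun j => y j)]
  simp [Finset.mem_range]

lemma dx_subset (B : NormSchauderBasis X) (ι : X → C₀(ℕ, ℂ))
    (hι : ∀ (x : X) (j : ℕ), ι x j = B.coord j x) (f : C₀(ℕ, ℂ) → ℂ) (u : ℕ → ℂ) :
    clusterSetDX B (f ∘ ι) u ⊆ clusterSetC0 f u := by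
  rintro lam ⟨κ, l, x, hne, hmem, hws, hlim⟩
  refine ⟨κ, l, fun i => ι (x i), hne, ?_, ?_, hlim⟩
  · intro i
    rw [mem_ball_zero_iff]
    have hco := coord_tendsto B (x i)
    have := hco.eventually (Metric.ball_mem_nhds (0:ℂ) (by norm_num : (0:ℝ) < 1/2))
    obtain ⟨M, hM⟩ := eventually_atTop.mp this
    set s : Finset ℝ := insert (1/2 : ℝ) ((Finset.range M).image fun j => ‖B.coord j (x i)‖)
      with hs
    have hsne : s.Nonempty := ⟨1/2, Finset.mem_insert_self _ _⟩
    set C := s.max' hsne with hC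
    have hhalf : (1/2 : ℝ) ≤ C := Finset.le_max' s _ (Finset.mem_insert_self _ _)
    have hClt : C < 1 := by
      have hCmem : C ∈ s := s.max'_mem hsne
      rcases Finset.mem_insert.mp hCmem with h | h
      · rw [h]; norm_num
      · obtain ⟨j, _, hj⟩ := Finset.mem_image.mp h
        rw [← hj]
        exact hmem i j
    refine lt_of_le_of_lt ?_ hClt
    apply c0_norm_le (by linarith)
    intro j
    rw [hι]
    by_cases hj : j < M
    · exact Finset.le_max' s _ (Finset.mem_insert_of_mem
        (Finset.mem_image_of_mem _ (Finset.mem_range.mpr hj)))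
    · have := hM j (Nat.not_lt.mp hj)
      rw [dist_zero_right] at this
      linarith
  · intro a
    have := hws a
    refine this.congr fun i => ?_
    congr 1
    funext j
    rw [hι]

lemma c0_subset (B : NormSchauderBasis X) (ι : X → C₀(ℕ, ℂ))
    (hι : ∀ (x : X) (j : ℕ), ι x j = B.coord j x) (f : C₀(ℕ, ℂ) → ℂ)
    (hf : DifferentiableOn ℂ f (ball 0 1)) (u : ℕ → ℂ) :
    clusterSetC0 f u ⊆ clusterSetDX B (f ∘ ι) u := by
  rintro lam ⟨κ, l, x, hne, hmem, hws, hlim⟩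
  have hcont : ∀ i, Tendsto (fun N => f (trunc N (x i))) atTop (𝓝 (f (x i))) := by
    intro i
    have hca : ContinuousAt f (x i) :=
      hf.continuousOn.continuousAt (isOpen_ball.mem_nhds (hmem i))
    exact hca.tendsto.comp (tendsto_trunc (x i))
  have hch : ∀ i m, ∃ N, m ≤ N ∧ ‖f (trunc N (x i)) - f (x i)‖ < 1/(m+1 : ℝ) := by
    intro i m
    have hpos : (0:ℝ) < 1/(m+1 : ℝ) := by positivity
    have h1 : ∀ᶠ N in atTop, ‖f (trunc N (x i)) - f (x i)‖ < 1/(m+1 : ℝ) := by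
      have := (hcont i).eventually (Metric.ball_mem_nhds (f (x i)) hpos)
      filter_upwards [this] with N hN
      rwa [dist_eq_norm] at hN
    exact ((eventually_ge_atTop m).and h1).exists
  choose n hn₁ hn₂ using hch
  have hιemb : ∀ (N : ℕ) (y : C₀(ℕ, ℂ)), ι (emb B N y) = trunc N y := by
    intro N y
    ext j
    rw [hι, coord_emb, trunc_apply]
  haveI : (l ×ˢ (atTop : Filter ℕ)).NeBot := hne.prod atTop_neBot
  refine ⟨κ × ℕ, l ×ˢ atTop, fun p => emb B (n p.1 p.2) (x p.1), this, ?_, ?_, ?_⟩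
  · intro p k
    rw [coord_emb]
    by_cases hk : k < n p.1 p.2
    · simp only [hk, if_true]
      calc ‖x p.1 k‖ ≤ ‖x p.1‖ := c0_apply_le _ _
        _ < 1 := mem_ball_zero_iff.mp (hmem p.1)
    · simp [hk]
  · intro a
    have ha : Summable fun j => ‖a j‖ := by
      have := (lp.memℓp a).summable (by norm_num : (0:ℝ) < (1 : ℝ≥0∞).toReal)
      simpa using this
    have hsum : ∀ i, Summable fun j => a j * x i j := by
      intro i
      refine Summable.of_norm_bounded ha fun j => ?_
      rw [norm_mul]
      calc ‖a j‖ * ‖x i j‖ ≤ ‖a j‖ * 1 := by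
            gcongr
            calc ‖x i j‖ ≤ ‖x i‖ := c0_apply_le _ _
              _ ≤ 1 := (mem_ball_zero_iff.mp (hmem i)).le
        _ = ‖a j‖ := mul_one _
    have key : ∀ p : κ × ℕ, ∑' j, a j * B.coord j (emb B (n p.1 p.2) (x p.1))
        = (∑' j, a j * x p.1 j)
          - ∑' j : {j // j ∉ Finset.range (n p.1 p.2)}, a j * x p.1 j := by
      intro p
      have h1 : ∑' j, a j * B.coord j (emb B (n p.1 p.2) (x p.1))
          = ∑ j ∈ Finset.range (n p.1 p.2), a j * x p.1 j := by
        rw [tsum_eq_sum (s := Finset.range (n p.1 p.2))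
          (fun j hj => by rw [coord_emb]; simp [Finset.mem_range.not.mp hj ,
            fun h => hj (Finset.mem_range.mpr h)])]
        refine Finset.sum_congr rfl fun j hj => ?_
        rw [coord_emb]
        simp [Finset.mem_range.mp hj]
      rw [h1, eq_sub_iff_add_eq]
      exact Summable.sum_add_tsum_subtype_compl (hsum p.1) (Finset.range (n p.1 p.2))
    have hsn : ∀ i, Summable fun j => ‖a j * x i j‖ := by
      intro i
      refine Summable.of_nonneg_of_le (fun j => norm_nonneg _) (fun j => ?_) ha
      rw [norm_mul]
      calc ‖a j‖ * ‖x i j‖ ≤ ‖a j‖ * 1 := by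
            gcongr
            calc ‖x i j‖ ≤ ‖x i‖ := c0_apply_le _ _
              _ ≤ 1 := (mem_ball_zero_iff.mp (hmem i)).le
        _ = ‖a j‖ := mul_one _
    have htail : Tendsto (fun p : κ × ℕ =>
        ∑' j : {j // j ∉ Finset.range (n p.1 p.2)}, a j * x p.1 j) (l ×ˢ atTop) (𝓝 0) := by
      apply squeeze_zero_norm (a := fun p : κ × ℕ =>
        ∑' j : {j // j ∉ Finset.range p.2}, ‖a (j : ℕ)‖)
      · intro p
        calc ‖∑' j : {j // j ∉ Finset.range (n p.1 p.2)}, a j * x p.1 j‖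
            ≤ ∑' j : {j // j ∉ Finset.range (n p.1 p.2)}, ‖a (j : ℕ) * x p.1 (j : ℕ)‖ :=
              norm_tsum_le_tsum_norm ((hsn p.1).subtype _)
          _ ≤ ∑' j : {j // j ∉ Finset.range (n p.1 p.2)}, ‖a (j : ℕ)‖ := by
              refine Summable.tsum_le_tsum (fun j => ?_) ((hsn p.1).subtype _) (ha.subtype _)
              rw [norm_mul]
              calc ‖a (j:ℕ)‖ * ‖x p.1 (j:ℕ)‖ ≤ ‖a (j:ℕ)‖ * 1 := by
                    gcongr
                    calc ‖x p.1 (j:ℕ)‖ ≤ ‖x p.1‖ := c0_apply_le _ _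
                      _ ≤ 1 := (mem_ball_zero_iff.mp (hmem p.1)).le
                _ = ‖a (j:ℕ)‖ := mul_one _
          _ ≤ ∑' j : {j // j ∉ Finset.range p.2}, ‖a (j : ℕ)‖ :=
              Summable.tsum_le_tsum_of_inj
                (fun j : {j // j ∉ Finset.range (n p.1 p.2)} =>
                  (⟨j.1, fun h => j.2 (Finset.mem_range.mpr
                    (lt_of_lt_of_le (Finset.mem_range.mp h) (hn₁ p.1 p.2)))⟩ :
                    {j // j ∉ Finset.range p.2}))
                (fun a b h => Subtype.ext (by simpa using congrArg Subtype.val h))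
                (fun c _ => norm_nonneg _) (fun b => le_of_eq rfl)
                (ha.subtype _) (ha.subtype _)
      · have h0 : Tendsto (fun N : ℕ => ∑' j : {j // j ∉ Finset.range N}, ‖a (j:ℕ)‖)
            atTop (𝓝 0) :=
          (tendsto_tsum_compl_atTop_zero (fun j => ‖a j‖)).comp tendsto_finset_range
        exact h0.comp tendsto_snd
    have hmain := ((hws a).comp (tendsto_fst (f := l) (g := (atTop : Filter ℕ)))).sub htail
    rw [sub_zero] at hmain
    exact hmain.congr fun p => (key p).symm
  · have hbase : Tendsto (fun p : κ × ℕ => f (x p.1)) (l ×ˢ atTop) (𝓝 lam) :=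
      hlim.comp tendsto_fst
    have hdiff : Tendsto (fun p : κ × ℕ => f (trunc (n p.1 p.2) (x p.1)) - f (x p.1))
        (l ×ˢ atTop) (𝓝 0) := by
      apply squeeze_zero_norm (a := fun p : κ × ℕ => 1/(p.2+1 : ℝ))
      · exact fun p => (hn₂ p.1 p.2).le
      · exact tendsto_one_div_add_atTop_nhds_zero_nat.comp tendsto_snd
    have hsumm := hbase.add hdiff
    rw [add_zero] at hsumm
    refine hsumm.congr fun p => ?_
    show f (x p.1) + (f (trunc (n p.1 p.2) (x p.1)) - f (x p.1))
        = (f ∘ ι) (emb B (n p.1 p.2) (x p.1))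
    rw [Function.comp_apply, hιemb]
    ring



end Stmt15Aux

/-- for `M` a subset of the closed unit ball of `ℓ_∞` and `f ∈ H^∞(B_{c₀})`
with `f ∘ ι ∈ H^∞(𝔻_X)`:
(a) a common disk `D(0,r)` lies in all `Cl_{B_{c₀}}(f,u)`, `u ∈ M`, iff a common disk
`D(0,r)` lies in all `Cl_{𝔻_X}(f∘ι, u)`, `u ∈ M`;
(b) each `Cl_{B_{c₀}}(f,u)`, `u ∈ M`, contains a disk iff each `Cl_{𝔻_X}(f∘ι, u)` does. -/
theorem stmt15 {X : Type*} [NormedAddCommGroup X] [NormedSpace ℂ X] [CompleteSpace X]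
    (B : NormSchauderBasis X) (ι : X → C₀(ℕ, ℂ)) (hι : ∀ (x : X) (j : ℕ), ι x j = B.coord j x)
    (M : Set (ℕ → ℂ)) (hM : ∀ u ∈ M, ∀ j, ‖u j‖ ≤ 1)
    (f : C₀(ℕ, ℂ) → ℂ) (hf : DifferentiableOn ℂ f (ball 0 1))
    (hfb : ∃ C : ℝ, ∀ z ∈ ball (0 : C₀(ℕ, ℂ)) 1, ‖f z‖ ≤ C)
    (hfι : DifferentiableOn ℂ (f ∘ ι) (polydisk B (fun _ => 1)))
    (hfιb : ∃ C : ℝ, ∀ x ∈ polydisk B (fun _ => 1), ‖(f ∘ ι) x‖ ≤ C) :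
    ((∃ r : ℝ, 0 < r ∧ ∀ u ∈ M, ball (0 : ℂ) r ⊆ clusterSetC0 f u) ↔
      (∃ r : ℝ, 0 < r ∧ ∀ u ∈ M, ball (0 : ℂ) r ⊆ clusterSetDX B (f ∘ ι) u)) ∧
    ((∀ u ∈ M, ∃ (c : ℂ) (r : ℝ), 0 < r ∧ ball c r ⊆ clusterSetC0 f u) ↔
      (∀ u ∈ M, ∃ (c : ℂ) (r : ℝ), 0 < r ∧ ball c r ⊆ clusterSetDX B (f ∘ ι) u)) := by
  have heq : ∀ u : ℕ → ℂ, clusterSetC0 f u = clusterSetDX B (f ∘ ι) u := fun u =>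
    Set.Subset.antisymm (Stmt15Aux.c0_subset B ι hι f hf u) (Stmt15Aux.dx_subset B ι hι f u)
  constructor
  · exact ⟨fun ⟨r, hr, h⟩ => ⟨r, hr, fun u hu => (heq u) ▸ h u hu⟩,
      fun ⟨r, hr, h⟩ => ⟨r, hr, fun u hu => (heq u) ▸ h u hu⟩⟩
  · exact ⟨fun h u hu => (heq u) ▸ h u hu, fun h u hu => (heq u) ▸ h u hu⟩
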